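/- Fix δ > 0. If x₁, x₂ ∈ ℝ^n satisfy ‖x₁ − x₂‖ ≤ r·n^{−1/2−δ}, then vol(B_r^n(x₁) \ B_r^n(x₂)) ≤ ((1+o(1))/√(2π)) · n^{−δ} · vol(B_r^n) as n → ∞. -/

import Mathlib

open MeasureTheory Filter Real


noncomputable def ballC (k : ℕ) : ℝ := Real.sqrt π ^ k / Real.Gamma ((k : ℝ) / 2 + 1)

lemma ballC_pos (k : ℕ) : 0 < ballC k := by
  apply div_pos (pow_pos (Real.sqrt_pos.mpr Real.pi_pos) _)
  apply Real.Gamma_pos_of_pos; positivity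

lemma gamma_mid {x : ℝ} (hx : 0 < x) :
    Real.Gamma (x + 1/2) ^ 2 ≤ Real.Gamma x * Real.Gamma (x + 1) := by
  have h1 : (0:ℝ) < x + 1 := by linarith
  have key := Real.convexOn_log_Gamma.2 (Set.mem_Ioi.mpr hx) (Set.mem_Ioi.mpr h1)
    (by norm_num : (0:ℝ) ≤ 1/2) (by norm_num : (0:ℝ) ≤ 1/2) (by norm_num)
  rw [show (1/2 : ℝ) • x + (1/2 : ℝ) • (x+1) = x + 1/2 by simp only [smul_eq_mul]; ring] at key
  simp only [Function.comp_apply, smul_eq_mul] at key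
  have hA := Real.Gamma_pos_of_pos hx
  have hB := Real.Gamma_pos_of_pos h1
  have hC := Real.Gamma_pos_of_pos (by linarith : (0:ℝ) < x + 1/2)
  have : Real.Gamma (x + 1/2) ≤ Real.sqrt (Real.Gamma x * Real.Gamma (x+1)) := by
    rw [show Real.sqrt (Real.Gamma x * Real.Gamma (x+1))
        = Real.exp (Real.log (Real.Gamma x * Real.Gamma (x+1)) / 2) from ?_]
    · calc Real.Gamma (x + 1/2) = Real.exp (Real.log (Real.Gamma (x + 1/2))) :=
            (Real.exp_log hC).symm
        _ ≤ _ := by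
            apply Real.exp_le_exp.mpr
            rw [Real.log_mul (ne_of_gt hA) (ne_of_gt hB)]
            linarith
    · rw [Real.sqrt_eq_rpow, Real.rpow_def_of_pos (by positivity)]
      ring_nf
  calc Real.Gamma (x + 1/2) ^ 2 ≤ Real.sqrt (Real.Gamma x * Real.Gamma (x+1)) ^ 2 := by
        apply pow_le_pow_left₀ (le_of_lt hC) this
    _ = _ := Real.sq_sqrt (by positivity)

-- g bounds: for x > 0, x / sqrt (x+1/2) ≤ Γ(x+1/2)/Γ(x) ≤ sqrt x
lemma g_ub {x : ℝ} (hx : 0 < x) : Real.Gamma (x + 1/2) / Real.Gamma x ≤ Real.sqrt x := by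
  have hA := Real.Gamma_pos_of_pos hx
  have hC := Real.Gamma_pos_of_pos (by linarith : (0:ℝ) < x + 1/2)
  rw [div_le_iff₀ hA]
  have h2 : Real.Gamma (x+1/2)^2 ≤ x * Real.Gamma x ^ 2 := by
    have := gamma_mid hx
    rwa [Real.Gamma_add_one (ne_of_gt hx), show Real.Gamma x * (x * Real.Gamma x)
      = x * Real.Gamma x ^2 by ring] at this
  nlinarith [Real.sq_sqrt hx.le, Real.sqrt_nonneg x, Real.sqrt_pos.mpr hx,
    mul_pos (Real.sqrt_pos.mpr hx) hA]

lemma g_lb {x : ℝ} (hx : 0 < x) :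
    x / Real.sqrt (x + 1/2) ≤ Real.Gamma (x + 1/2) / Real.Gamma x := by
  have hA := Real.Gamma_pos_of_pos hx
  have hxh : (0:ℝ) < x + 1/2 := by linarith
  have hC := Real.Gamma_pos_of_pos hxh
  have key := gamma_mid hxh
  -- Γ(x+1)² ≤ Γ(x+1/2) Γ(x+3/2) = (x+1/2) Γ(x+1/2)²
  rw [show x + 1/2 + 1/2 = x + 1 by ring, show x + 1/2 + 1 = (x+1/2) + 1 by ring,
    Real.Gamma_add_one (ne_of_gt hxh), Real.Gamma_add_one (ne_of_gt hx)] at key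
  -- key : (x Γ x)^2 ≤ Γ(x+1/2) * ((x+1/2) * Γ(x+1/2))
  have hs : Real.sqrt (x+1/2) > 0 := Real.sqrt_pos.mpr hxh
  rw [div_le_div_iff₀ hs hA]
  -- x * Γ x ≤ Γ(x+1/2) * √(x+1/2)
  have h2 : (x * Real.Gamma x)^2 ≤ (Real.Gamma (x+1/2) * Real.sqrt (x+1/2))^2 := by
    calc (x * Real.Gamma x)^2 ≤ Real.Gamma (x + 1/2) * ((x+1/2) * Real.Gamma (x+1/2)) := key
      _ = (Real.Gamma (x+1/2) * Real.sqrt (x+1/2))^2 := by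
          rw [mul_pow, Real.sq_sqrt hxh.le]; ring
  nlinarith [h2, mul_pos hC hs, mul_pos hx hA]


noncomputable def fseq : ℕ → ℝ := fun n =>
  if n = 0 then 0 else Real.sqrt (2*π) * ballC (n-1) / (Real.sqrt n * ballC n) - 1


lemma ratio_eq (n : ℕ) (hn : 1 ≤ n) :
    1 + fseq n = Real.sqrt 2 / Real.sqrt n
      * (Real.Gamma (((n:ℝ)+1)/2 + 1/2) / Real.Gamma (((n:ℝ)+1)/2)) := by
  have hn0 : n ≠ 0 := Nat.one_le_iff_ne_zero.mp hn
  have h1 : ((n - 1 : ℕ) : ℝ) = (n : ℝ) - 1 := by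
    push_cast [Nat.cast_sub hn]; ring
  have hsπ : Real.sqrt π > 0 := Real.sqrt_pos.mpr Real.pi_pos
  have hΓ1 : Real.Gamma (((n:ℝ)+1)/2) > 0 := Real.Gamma_pos_of_pos (by positivity)
  have hΓ2 : Real.Gamma ((n:ℝ)/2 + 1) > 0 := Real.Gamma_pos_of_pos (by positivity)
  have hn' : Real.sqrt n > 0 := Real.sqrt_pos.mpr (by exact_mod_cast Nat.pos_of_ne_zero hn0)
  simp only [fseq, if_neg hn0, ballC, h1]
  rw [show ((n:ℝ)-1)/2 + 1 = ((n:ℝ)+1)/2 by ring, show ((n:ℝ)+1)/2 + 1/2 = (n:ℝ)/2 + 1 by ring]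
  rw [Real.sqrt_mul (by norm_num : (0:ℝ) ≤ 2) π]
  have hpow : Real.sqrt π ^ n = Real.sqrt π ^ (n-1) * Real.sqrt π := by
    rw [← pow_succ, Nat.sub_add_cancel hn]
  rw [hpow]
  field_simp
  ring

lemma one_le_one_add_fseq (n : ℕ) (hn : 1 ≤ n) : 1 ≤ 1 + fseq n := by
  have hn0 : (0:ℝ) < n := by exact_mod_cast hn
  set x : ℝ := ((n:ℝ)+1)/2 with hx
  have hxpos : 0 < x := by positivity
  rw [ratio_eq n hn]
  have hlow := g_lb hxpos
  have hn' : Real.sqrt n > 0 := Real.sqrt_pos.mpr hn0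
  have h2 : Real.sqrt 2 > 0 := Real.sqrt_pos.mpr (by norm_num)
  have step : (1:ℝ) ≤ Real.sqrt 2 / Real.sqrt n * (x / Real.sqrt (x + 1/2)) := by
    have hs : Real.sqrt (x+1/2) > 0 := Real.sqrt_pos.mpr (by positivity)
    rw [div_mul_div_comm, le_div_iff₀ (by positivity), one_mul]
    -- √n * √(x+1/2) ≤ √2 * x
    have e1 : Real.sqrt n * Real.sqrt (x + 1/2) = Real.sqrt ((n:ℝ) * (x + 1/2)) :=
      (Real.sqrt_mul hn0.le _).symm
    have e2 : Real.sqrt 2 * x = Real.sqrt (2 * x^2) := by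
      rw [Real.sqrt_mul (by norm_num), Real.sqrt_sq hxpos.le]
    rw [e1, e2]
    apply Real.sqrt_le_sqrt
    rw [hx]; nlinarith
  refine step.trans ?_
  apply mul_le_mul_of_nonneg_left hlow (by positivity)

lemma fseq_nonneg (n : ℕ) : 0 ≤ fseq n := by
  rcases Nat.eq_zero_or_pos n with h | h
  · simp [fseq, h]
  · linarith [one_le_one_add_fseq n h]

lemma fseq_le (n : ℕ) : fseq n ≤ Real.sqrt (1 + 1/(n:ℝ)) - 1 := by
  rcases Nat.eq_zero_or_pos n with h | h
  · simp [fseq, h]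
  · have hn0 : (0:ℝ) < n := by exact_mod_cast h
    have key : 1 + fseq n ≤ Real.sqrt (1 + 1/(n:ℝ)) := by
      rw [ratio_eq n h]
      set x : ℝ := ((n:ℝ)+1)/2 with hx
      have hxpos : 0 < x := by positivity
      calc Real.sqrt 2 / Real.sqrt n * (Real.Gamma (x + 1/2) / Real.Gamma x)
          ≤ Real.sqrt 2 / Real.sqrt n * Real.sqrt x :=
            mul_le_mul_of_nonneg_left (g_ub hxpos) (by positivity)
        _ = Real.sqrt (1 + 1/(n:ℝ)) := by
            rw [div_mul_eq_mul_div, ← Real.sqrt_mul (by norm_num : (0:ℝ) ≤ 2),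
              ← Real.sqrt_div (by positivity)]
            congr 1
            rw [hx]; field_simp
    linarith
lemma fseq_tendsto : Tendsto fseq atTop (nhds 0) := by
  have h1 : Tendsto (fun n : ℕ => 1 + 1/(n:ℝ)) atTop (nhds 1) := by
    have h0 : Tendsto (fun n : ℕ => 1/(n:ℝ)) atTop (nhds 0) :=
      tendsto_one_div_atTop_nhds_zero_nat
    have := ((tendsto_const_nhds : Tendsto (fun _ : ℕ => (1:ℝ)) atTop (nhds 1))).add h0
    simpa using this
  have h2 : Tendsto (fun n : ℕ => Real.sqrt (1 + 1/(n:ℝ)) - 1) atTop (nhds 0) := by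
    have := (Real.continuous_sqrt.tendsto 1).comp h1
    have h3 := this.sub ((tendsto_const_nhds : Tendsto (fun _ : ℕ => (1:ℝ)) atTop (nhds 1)))
    simpa using h3
  exact tendsto_of_tendsto_of_tendsto_of_le_of_le tendsto_const_nhds h2 fseq_nonneg fseq_le


lemma slab_vol_le (n : ℕ) (hn : 1 ≤ n) (r a b : ℝ) (hr : 0 ≤ r)
    (u x₀ : EuclideanSpace ℝ (Fin n)) (hu : ‖u‖ = 1) :
    volume {y : EuclideanSpace ℝ (Fin n) |
        y ∈ Metric.closedBall x₀ r ∧ (inner ℝ u y : ℝ) ∈ Set.Ico a b}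
      ≤ ENNReal.ofReal (b - a) * ENNReal.ofReal (r ^ (n-1) * ballC (n-1)) := by
  classical
  set i₀ : Fin n := ⟨0, hn⟩ with hi₀
  have hv : Orthonormal ℝ (({i₀} : Set (Fin n)).restrict (fun _ : Fin n => u)) := by
    constructor
    · intro i; simpa [Set.restrict] using hu
    · intro i j hij
      exact absurd (Subsingleton.elim i j) hij
  obtain ⟨bas, hbas⟩ := hv.exists_orthonormalBasis_extension_of_card_eq
    (by simp [finrank_euclideanSpace])
  have hbasu : bas i₀ = u := hbas i₀ (Set.mem_singleton i₀)
  have hrepr : ∀ y : EuclideanSpace ℝ (Fin n), (inner ℝ u y : ℝ) = bas.repr y i₀ := by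
    intro y; rw [bas.repr_apply_apply, hbasu]
  set c : EuclideanSpace ℝ (Fin n) := bas.repr x₀ with hc
  set Z : Set (EuclideanSpace ℝ (Fin n)) :=
    {z | z ∈ Metric.closedBall c r ∧ z i₀ ∈ Set.Ico a b} with hZ
  have hZmeas : MeasurableSet Z := by
    apply MeasurableSet.inter (Metric.isClosed_closedBall.measurableSet)
    exact measurableSet_Ico.preimage (EuclideanSpace.proj i₀).continuous.measurable
  have hset : {y : EuclideanSpace ℝ (Fin n) |
      y ∈ Metric.closedBall x₀ r ∧ (inner ℝ u y : ℝ) ∈ Set.Ico a b} = bas.repr ⁻¹' Z := by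
    ext y
    simp only [Set.mem_setOf_eq, Set.mem_preimage, hZ, Metric.mem_closedBall, hc]
    rw [hrepr y, bas.repr.dist_map]
  rw [hset, (bas.measurePreserving_repr).measure_preimage hZmeas.nullMeasurableSet]
  have hφ := (EuclideanSpace.volume_preserving_symm_measurableEquiv_toLp (Fin n)).symm
  rw [← hφ.measure_preimage hZmeas.nullMeasurableSet]
  obtain ⟨p, hp⟩ : ∃ p : Fin n → Prop, p = fun i => i = i₀ := ⟨_, rfl⟩
  set P₁ : Set ({i : Fin n // p i} → ℝ) :=
    Set.pi Set.univ (fun _ => Set.Ico a b) with hP₁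
  set P₂ : Set ({i : Fin n // ¬ p i} → ℝ) :=
    {h | ∑ j, (h j - c j.1)^2 ≤ r^2} with hP₂
  have hP₁meas : MeasurableSet P₁ :=
    MeasurableSet.univ_pi (fun _ => measurableSet_Ico)
  have hP₂cont : Continuous (fun h : {i : Fin n // ¬ p i} → ℝ => ∑ j, (h j - c j.1)^2) :=
    continuous_finset_sum _ (fun j _ => ((continuous_apply j).sub continuous_const).pow 2)
  have hP₂meas : MeasurableSet P₂ := measurableSet_Iic.preimage hP₂cont.measurable
  have hsub : (MeasurableEquiv.toLp 2 (Fin n → ℝ)) ⁻¹' Z ⊆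
      (MeasurableEquiv.piEquivPiSubtypeProd (fun _ : Fin n => ℝ) p) ⁻¹' (P₁ ×ˢ P₂) := by
    intro g hg
    simp only [Set.mem_preimage, hZ, Set.mem_setOf_eq, Metric.mem_closedBall] at hg
    obtain ⟨hg1, hg2⟩ := hg
    have hcoord : ∀ i, ((MeasurableEquiv.toLp 2 (Fin n → ℝ)) g) i = g i :=
      fun i => rfl
    constructor
    · intro j _
      have hj : (j : Fin n) = i₀ := by
        have h2 := j.2
        simp only [hp] at h2
        exact h2
      show g (j : Fin n) ∈ Set.Ico a b
      rw [hj]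
      simpa [hcoord] using hg2
    · simp only [hP₂, MeasurableEquiv.piEquivPiSubtypeProd, Set.mem_setOf_eq]
      rw [EuclideanSpace.dist_eq] at hg1
      set S : ℝ := ∑ i, dist (((MeasurableEquiv.toLp 2 (Fin n → ℝ)) g) i) (c i) ^ 2
        with hS
      have hS0 : 0 ≤ S := Finset.sum_nonneg (fun i _ => sq_nonneg _)
      have hsum : S ≤ r ^ 2 := by nlinarith [Real.sq_sqrt hS0, Real.sqrt_nonneg S]
      calc ∑ j : {i : Fin n // ¬ p i}, (g j.1 - c j.1)^2
          = ∑ j ∈ Finset.univ.filter (fun i => ¬ p i), (g j - c j)^2 :=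
            (Finset.sum_subtype _ (fun i => by simp) (fun i => (g i - c i)^2)).symm
        _ ≤ ∑ i, (g i - c i)^2 := Finset.sum_le_sum_of_subset_of_nonneg
            (Finset.filter_subset _ _) (fun i _ _ => sq_nonneg _)
        _ ≤ r ^ 2 := by
            refine le_trans (le_of_eq ?_) hsum
            refine Finset.sum_congr rfl (fun i _ => ?_)
            rw [Real.dist_eq, sq_abs, hcoord i]
  have hcard1 : Fintype.card {i : Fin n // p i} = 1 := by
    rw [Fintype.card_congr (Equiv.subtypeEquivRight (fun i => by rw [hp]))]
    exact Fintype.card_subtype_eq i₀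
  have hvolP₁ : volume P₁ = ENNReal.ofReal (b - a) := by
    rw [hP₁, volume_pi_pi, Finset.prod_const, Finset.card_univ, hcard1, pow_one,
      Real.volume_Ico]
  have hvolP₂ : volume P₂ ≤ ENNReal.ofReal (r ^ (n-1) * ballC (n-1)) := by
    set c₂ : EuclideanSpace ℝ {i : Fin n // ¬ p i} := WithLp.toLp 2 (fun j => c j.1) with hc₂
    have hP₂eq : P₂ =
        (MeasurableEquiv.toLp 2 ({i : Fin n // ¬ p i} → ℝ)).symm.symm ⁻¹' (Metric.closedBall c₂ r) := by
      ext h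
      simp only [hP₂, Set.mem_setOf_eq, Set.mem_preimage, Metric.mem_closedBall]
      rw [EuclideanSpace.dist_eq, Real.sqrt_le_iff]
      constructor
      · intro hh
        refine ⟨hr, le_trans (le_of_eq ?_) hh⟩
        exact Finset.sum_congr rfl (fun j _ => by rw [Real.dist_eq, sq_abs]; rfl)
      · rintro ⟨-, hh⟩
        refine le_trans (le_of_eq ?_) hh
        exact Finset.sum_congr rfl (fun j _ => by rw [Real.dist_eq, sq_abs]; rfl)
    rw [hP₂eq, ((EuclideanSpace.volume_preserving_symm_measurableEquiv_toLp {i : Fin n // ¬ p i}).symm).measure_preimage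
      Metric.isClosed_closedBall.measurableSet.nullMeasurableSet]
    rcases eq_or_lt_of_le hn with h1 | h2
    · -- n = 1 : τ is empty
      haveI : IsEmpty {i : Fin n // ¬ p i} := by
        refine ⟨fun j => j.2 ?_⟩
        have hss : Subsingleton (Fin n) := by rw [← h1]; infer_instance
        show p ↑j
        simp only [hp]
        exact Subsingleton.elim _ _
      rw [volume_euclideanSpace_eq_dirac, Measure.dirac_apply' _
        Metric.isClosed_closedBall.measurableSet]
      have h0 : (0 : EuclideanSpace ℝ {i : Fin n // ¬ p i}) ∈ Metric.closedBall c₂ r := by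
        have hc0 : c₂ = 0 := by ext j; exact (IsEmpty.false j).elim
        simpa [hc0] using hr
      rw [Set.indicator_of_mem h0]
      have : n - 1 = 0 := by omega
      rw [this]
      simp [ballC, Real.Gamma_one]
    · -- n ≥ 2 : τ is nonempty of card n - 1
      haveI : Nonempty {i : Fin n // ¬ p i} :=
        ⟨⟨⟨1, h2⟩, by rw [hp]; simp [hi₀, Fin.ext_iff]⟩⟩
      have hcard : Fintype.card {i : Fin n // ¬ p i} = n - 1 := by
        have hcc := Fintype.card_subtype_compl p
        rw [hcard1] at hcc
        simpa using hcc
      rw [EuclideanSpace.volume_closedBall, hcard, ENNReal.ofReal_mul (by positivity),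
        ← ENNReal.ofReal_pow hr]
      rfl
  calc volume ((MeasurableEquiv.toLp 2 (Fin n → ℝ)) ⁻¹' Z)
      ≤ volume ((MeasurableEquiv.piEquivPiSubtypeProd (fun _ : Fin n => ℝ) p) ⁻¹'
          (P₁ ×ˢ P₂)) := measure_mono hsub
    _ = volume (P₁ ×ˢ P₂) :=
        (volume_preserving_piEquivPiSubtypeProd (fun _ : Fin n => ℝ) p).measure_preimage
          (hP₁meas.prod hP₂meas).nullMeasurableSet
    _ = volume P₁ * volume P₂ := by rw [Measure.volume_eq_prod, Measure.prod_prod]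
    _ ≤ ENNReal.ofReal (b - a) * ENNReal.ofReal (r ^ (n-1) * ballC (n-1)) := by
        rw [hvolP₁]
        exact mul_le_mul_right hvolP₂ _



lemma vol_diff_le (n : ℕ) (hn : 1 ≤ n) (r : ℝ) (hr : 0 ≤ r)
    (x₁ x₂ : EuclideanSpace ℝ (Fin n)) (hne : x₁ ≠ x₂) :
    volume (Metric.closedBall x₁ r \ Metric.closedBall x₂ r)
      ≤ ENNReal.ofReal (dist x₁ x₂) * ENNReal.ofReal (r ^ (n-1) * ballC (n-1)) := by
  set d : ℝ := dist x₁ x₂ with hd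
  have hd0 : 0 < d := dist_pos.mpr hne
  set u : EuclideanSpace ℝ (Fin n) := d⁻¹ • (x₂ - x₁) with hu_def
  have hxx : ‖x₂ - x₁‖ = d := by rw [hd, dist_comm, dist_eq_norm]
  have hu : ‖u‖ = 1 := by
    rw [hu_def, norm_smul, hxx, norm_inv, Real.norm_eq_abs, abs_of_pos hd0]
    field_simp
  set L : EuclideanSpace ℝ (Fin n) → ℝ := fun y => (inner ℝ u y : ℝ) with hL
  have hLcont : Continuous L := continuous_const.inner continuous_id
  have hdu : d • u = x₂ - x₁ := by
    rw [hu_def, smul_smul, mul_inv_cancel₀ (ne_of_gt hd0), one_smul]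
  have hLsub : ∀ y z, L (y - z) = L y - L z := by
    intro y z; simp only [hL, inner_sub_right]
  have hLadd : ∀ y z, L (y + z) = L y + L z := by
    intro y z; simp only [hL, inner_add_right]
  have huu : (inner ℝ u u : ℝ) = 1 := by
    rw [real_inner_self_eq_norm_sq, hu]; norm_num
  have hL21 : (inner ℝ u (x₂ - x₁) : ℝ) = d := by
    rw [← hdu, real_inner_smul_right, huu, mul_one]
  have hLx₂ : L x₂ = L x₁ + d := by
    have := hLsub x₂ x₁
    simp only [hL] at this ⊢
    rw [hL21] at this
    linarith
  set c : ℝ := L x₁ with hc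
  have hinner : ∀ y, (inner ℝ (x₂ - x₁) y : ℝ) = d * L y := by
    intro y; rw [← hdu, real_inner_smul_left, hL]
  -- key₁ : in B₁ and L y ≥ c + d/2 implies in B₂
  have key₁ : ∀ y, y ∈ Metric.closedBall x₁ r → c + d/2 ≤ L y →
      y ∈ Metric.closedBall x₂ r := by
    intro y hy hLy
    rw [Metric.mem_closedBall, dist_eq_norm] at hy ⊢
    have hexp : ‖y - x₂‖^2 = ‖y - x₁‖^2 - 2 * (d * (L y - c)) + d^2 := by
      have e : y - x₂ = (y - x₁) - (x₂ - x₁) := by abel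
      rw [e, norm_sub_sq_real, real_inner_comm, hinner, hxx, hLsub, hc]
    nlinarith [norm_nonneg (y - x₂), norm_nonneg (y - x₁)]
  -- key₂ : in B₂ and L y ≤ c + d/2 implies in B₁
  have key₂ : ∀ y, y ∈ Metric.closedBall x₂ r → L y ≤ c + d/2 →
      y ∈ Metric.closedBall x₁ r := by
    intro y hy hLy
    rw [Metric.mem_closedBall, dist_eq_norm] at hy ⊢
    have hexp : ‖y - x₁‖^2 = ‖y - x₂‖^2 + 2 * (d * (L y - (c + d))) + d^2 := by
      have e : y - x₁ = (y - x₂) + (x₂ - x₁) := by abel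
      rw [e, norm_add_sq_real, real_inner_comm, hinner, hxx, hLsub, hLx₂, hc]
    nlinarith [norm_nonneg (y - x₂), norm_nonneg (y - x₁)]
  set B₁ := Metric.closedBall x₁ r with hB₁
  set B₂ := Metric.closedBall x₂ r with hB₂
  set A : Set (EuclideanSpace ℝ (Fin n)) := B₁ ∩ L ⁻¹' (Set.Iio (c + d/2)) with hA
  set A' : Set (EuclideanSpace ℝ (Fin n)) := B₂ ∩ L ⁻¹' (Set.Iio (c + d/2)) with hA'
  set S₀ : Set (EuclideanSpace ℝ (Fin n)) := B₁ ∩ L ⁻¹' (Set.Iio (c - d/2)) with hS₀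
  set S : Set (EuclideanSpace ℝ (Fin n)) :=
    B₁ ∩ L ⁻¹' (Set.Ico (c - d/2) (c + d/2)) with hS
  have hmeasB₁ : MeasurableSet B₁ := Metric.isClosed_closedBall.measurableSet
  have hmeasB₂ : MeasurableSet B₂ := Metric.isClosed_closedBall.measurableSet
  have hmeasA' : MeasurableSet A' :=
    hmeasB₂.inter (measurableSet_Iio.preimage hLcont.measurable)
  have hmeasS₀ : MeasurableSet S₀ :=
    hmeasB₁.inter (measurableSet_Iio.preimage hLcont.measurable)
  have hmeasS : MeasurableSet S :=
    hmeasB₁.inter (measurableSet_Ico.preimage hLcont.measurable)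
  have hfinB₂ : volume B₂ ≠ ⊤ := (isCompact_closedBall x₂ r).measure_lt_top.ne
  have hfinB₁ : volume B₁ ≠ ⊤ := (isCompact_closedBall x₁ r).measure_lt_top.ne
  -- B₁ \ B₂ = A \ A'
  have hBB : B₁ \ B₂ = A \ A' := by
    ext y
    simp only [Set.mem_diff, hA, hA', Set.mem_inter_iff, Set.mem_preimage, Set.mem_Iio]
    constructor
    · rintro ⟨h1, h2⟩
      have hlt : L y < c + d/2 := by
        by_contra hcon
        exact h2 (key₁ y h1 (le_of_not_gt hcon))
      exact ⟨⟨h1, hlt⟩, fun hcon => h2 hcon.1⟩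
    · rintro ⟨⟨h1, h2⟩, h3⟩
      exact ⟨h1, fun hy2 => h3 ⟨hy2, h2⟩⟩
  -- A' ⊆ A
  have hA'A : A' ⊆ A := by
    rintro y ⟨hy1, hy2⟩
    exact ⟨key₂ y hy1 (le_of_lt hy2), hy2⟩
  -- A = S₀ ∪ S, disjoint
  have hAsplit : A = S₀ ∪ S := by
    ext y
    simp only [hA, hS₀, hS, Set.mem_inter_iff, Set.mem_preimage, Set.mem_Iio, Set.mem_Ico,
      Set.mem_union]
    constructor
    · rintro ⟨h1, h2⟩
      rcases lt_or_ge (L y) (c - d/2) with h | h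
      · exact Or.inl ⟨h1, h⟩
      · exact Or.inr ⟨h1, h, h2⟩
    · rintro (⟨h1, h2⟩ | ⟨h1, h2, h3⟩)
      · exact ⟨h1, by linarith⟩
      · exact ⟨h1, h3⟩
  have hdisj : Disjoint S₀ S := by
    apply Set.disjoint_left.mpr
    rintro y ⟨-, hy2⟩ ⟨-, hy3⟩
    simp only [Set.mem_preimage, Set.mem_Iio] at hy2
    simp only [Set.mem_preimage, Set.mem_Ico] at hy3
    linarith [hy3.1]
  -- volume A' = volume S₀ via translation
  have htrans : volume A' = volume S₀ := by
    have hAeq : A' = (fun y => y + (x₁ - x₂)) ⁻¹' S₀ := by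
      ext y
      simp only [hA', hS₀, Set.mem_inter_iff, Set.mem_preimage, Set.mem_Iio,
        Metric.mem_closedBall, hB₁, hB₂]
      have e1 : dist (y + (x₁ - x₂)) x₁ = dist y x₂ := by
        rw [dist_eq_norm, dist_eq_norm]
        congr 1
        abel
      have e2 : L (y + (x₁ - x₂)) = L y - d := by
        rw [hLadd]
        have h3 : L (x₁ - x₂) = -d := by
          rw [hLsub]
          linarith [hLx₂, hc]
        rw [h3]
        ring
      rw [e1, e2]
      constructor
      · rintro ⟨h1, h2⟩; exact ⟨h1, by linarith⟩
      · rintro ⟨h1, h2⟩; exact ⟨h1, by linarith⟩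
    rw [hAeq]
    exact (measurePreserving_add_right volume (x₁ - x₂)).measure_preimage
      hmeasS₀.nullMeasurableSet
  -- put it together
  have hvol : volume (B₁ \ B₂) = volume S := by
    rw [hBB, measure_diff hA'A hmeasA'.nullMeasurableSet
      (ne_top_of_le_ne_top hfinB₂ (measure_mono (Set.inter_subset_left)))]
    rw [htrans, hAsplit, measure_union hdisj hmeasS]
    rw [ENNReal.add_sub_cancel_left
      (ne_top_of_le_ne_top hfinB₁ (measure_mono (Set.inter_subset_left)))]
  rw [hvol]
  have := slab_vol_le n hn r (c - d/2) (c + d/2) hr u x₁ hu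
  have hSeq : S = {y : EuclideanSpace ℝ (Fin n) |
      y ∈ Metric.closedBall x₁ r ∧ (inner ℝ u y : ℝ) ∈ Set.Ico (c - d/2) (c + d/2)} := rfl
  rw [hSeq]
  convert this using 3
  ring

theorem ball_diff_volume_asymptotic (δ : ℝ) (hδ : 0 < δ) :
    ∃ f : ℕ → ℝ, Filter.Tendsto f Filter.atTop (nhds 0) ∧
      ∀ n : ℕ, ∀ r : ℝ, 0 ≤ r → ∀ x₁ x₂ : EuclideanSpace ℝ (Fin n),
        dist x₁ x₂ ≤ r * (n : ℝ) ^ (-(1 / 2 : ℝ) - δ) →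
        (volume (Metric.closedBall x₁ r \ Metric.closedBall x₂ r)).toReal
          ≤ ((1 + f n) / Real.sqrt (2 * π)) * (n : ℝ) ^ (-δ)
              * (volume (Metric.closedBall (0 : EuclideanSpace ℝ (Fin n)) r)).toReal := by
  refine ⟨fseq, fseq_tendsto, ?_⟩
  intro n r hr x₁ x₂ hdist
  have hRHS0 : 0 ≤ ((1 + fseq n) / Real.sqrt (2 * π)) * (n : ℝ) ^ (-δ)
      * (volume (Metric.closedBall (0 : EuclideanSpace ℝ (Fin n)) r)).toReal := by
    apply mul_nonneg (mul_nonneg ?_ ?_) ENNReal.toReal_nonneg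
    · exact div_nonneg (by linarith [fseq_nonneg n]) (Real.sqrt_nonneg _)
    · exact Real.rpow_nonneg (Nat.cast_nonneg n) _
  by_cases hx : x₁ = x₂
  · rw [hx, Set.diff_self]
    simpa using hRHS0
  · have hn : 1 ≤ n := by
      by_contra hcon
      push_neg at hcon
      have hn0 : n = 0 := by omega
      subst hn0
      exact hx (Subsingleton.elim x₁ x₂)
    have hn0R : (0:ℝ) < n := by exact_mod_cast hn
    have hd := vol_diff_le n hn r hr x₁ x₂ hx
    have hm0 : 0 ≤ r ^ (n-1) * ballC (n-1) := mul_nonneg (pow_nonneg hr _) (ballC_pos _).le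
    have hL : (volume (Metric.closedBall x₁ r \ Metric.closedBall x₂ r)).toReal
        ≤ dist x₁ x₂ * (r ^ (n-1) * ballC (n-1)) := by
      apply ENNReal.toReal_le_of_le_ofReal (mul_nonneg dist_nonneg hm0)
      rw [ENNReal.ofReal_mul dist_nonneg]
      exact hd
    have hvol : (volume (Metric.closedBall (0 : EuclideanSpace ℝ (Fin n)) r)).toReal
        = r^n * ballC n := by
      haveI : Nonempty (Fin n) := ⟨⟨0, hn⟩⟩
      rw [EuclideanSpace.volume_closedBall, Fintype.card_fin, ENNReal.toReal_mul,
        ← ENNReal.ofReal_pow hr, ENNReal.toReal_ofReal (by positivity),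
        ENNReal.toReal_ofReal (div_nonneg (by positivity) (Real.Gamma_pos_of_pos (by positivity)).le)]
      rfl
    have h1f : 1 + fseq n = Real.sqrt (2*π) * ballC (n-1) / (Real.sqrt n * ballC n) := by
      simp only [fseq, if_neg (Nat.one_le_iff_ne_zero.mp hn)]
      ring
    have hsplit : (n:ℝ) ^ (-(1/2:ℝ) - δ) = ((n:ℝ) ^ (-(1/2:ℝ))) * (n:ℝ) ^ (-δ) := by
      rw [show (-(1/2:ℝ) - δ) = (-(1/2:ℝ)) + (-δ) by ring, Real.rpow_add hn0R]
    have hhalf : (n:ℝ) ^ (-(1/2:ℝ)) = (Real.sqrt n)⁻¹ := by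
      rw [Real.rpow_neg (Nat.cast_nonneg n), Real.sqrt_eq_rpow]
    have hrn : r * r ^ (n-1) = r ^ n := by
      rw [← pow_succ']
      congr 1
      omega
    have h2π : Real.sqrt (2*π) ≠ 0 := ne_of_gt (Real.sqrt_pos.mpr (by positivity))
    have hsn : Real.sqrt n ≠ 0 := ne_of_gt (Real.sqrt_pos.mpr hn0R)
    have hbn : ballC n ≠ 0 := ne_of_gt (ballC_pos n)
    have hfin : r * (n:ℝ) ^ (-(1/2:ℝ) - δ) * (r ^ (n-1) * ballC (n-1))
        = ((1 + fseq n) / Real.sqrt (2*π)) * (n:ℝ) ^ (-δ) * (r^n * ballC n) := by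
      rw [h1f, hsplit, hhalf, ← hrn]
      field_simp
    rw [hvol]
    calc (volume (Metric.closedBall x₁ r \ Metric.closedBall x₂ r)).toReal
        ≤ dist x₁ x₂ * (r ^ (n-1) * ballC (n-1)) := hL
      _ ≤ r * (n:ℝ) ^ (-(1/2:ℝ) - δ) * (r ^ (n-1) * ballC (n-1)) :=
          mul_le_mul_of_nonneg_right hdist hm0
      _ = _ := hfin
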